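/- Fix real constants γ > 0 and δ > 0 and a sequence ξ : ℕ → [0,1). Define a coupled sequence (A_k, B_k, X_k, Y_k) in ℕ⁴ recursively as follows, with λ_k := γ(A_k+B_k)+δ·A_k·B_k: if max{A_k,B_k} = 0 or max{X_k,Y_k} = 0 the state is unchanged; otherwise set (A_{k+1},B_{k+1}) = (A_k−1,B_k−1) if ξ_{k+1} ∈ [0, δA_kB_k/λ_k), (A_k+1,B_k) if ξ_{k+1} ∈ [δA_kB_k/λ_k, 1 − γB_k/λ_k), and (A_k,B_k+1) if ξ_{k+1} ∈ [1 − γB_k/λ_k, 1); and set (X_{k+1},Y_{k+1}) = (X_k,Y_k) if ξ_{k+1} ∈ [0, δA_kB_k/λ_k), (X_k+1,Y_k) if ξ_{k+1} ∈ [δA_kB_k/λ_k, 1 − (γ(A_k+B_k)/λ_k)·(Y_k/(X_k+Y_k))), and (X_k,Y_k+1) if ξ_{k+1} ∈ [1 − (γ(A_k+B_k)/λ_k)·(Y_k/(X_k+Y_k)), 1). If X_0 = A_0 ≥ B_0 = Y_0 and X_k ≥ Y_k for all 0 ≤ k ≤ K, then X_k − Y_k ≤ A_k − B_k for all 0 ≤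 k ≤ K (differences taken in ℤ). -/
import Mathlib


open Classical in
/-- One step of the discrete-time coupling of the A-B chain with two parallel Yule
processes X and Y. The state is `(A, B, X, Y)`, `x` is the uniform random variable
`ξ_{k+1}`, and `lam = γ(A+B) + δAB`. -/
noncomputable def abxyStep (γ δ : ℝ) (s : ℕ × ℕ × ℕ × ℕ) (x : ℝ) : ℕ × ℕ × ℕ × ℕ :=
  let a := s.1
  let b := s.2.1
  let X := s.2.2.1
  let Y := s.2.2.2
  if max a b = 0 ∨ max X Y = 0 then s
  else
    let lam : ℝ := γ * ((a : ℝ) + (b : ℝ)) + δ * (a : ℝ) * (b : ℝ)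
    let ab : ℕ × ℕ :=
      if x < δ * (a : ℝ) * (b : ℝ) / lam then (a - 1, b - 1)
      else if x < 1 - γ * (b : ℝ) / lam then (a + 1, b)
      else (a, b + 1)
    let xy : ℕ × ℕ :=
      if x < δ * (a : ℝ) * (b : ℝ) / lam then (X, Y)
      else if x < 1 - (γ * ((a : ℝ) + (b : ℝ)) / lam) * ((Y : ℝ) / ((X : ℝ) + (Y : ℝ)))
        then (X + 1, Y)
      else (X, Y + 1)
    (ab.1, ab.2, xy.1, xy.2)

/-- The coupled trajectory: the `(k+1)`-th transition is driven by `ξ (k+1)`. -/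
noncomputable def abxyTraj (γ δ : ℝ) (ξ : ℕ → ℝ) (s0 : ℕ × ℕ × ℕ × ℕ) :
    ℕ → ℕ × ℕ × ℕ × ℕ
  | 0 => s0
  | k + 1 => abxyStep γ δ (abxyTraj γ δ ξ s0 k) (ξ (k + 1))

lemma step_inv (γ δ : ℝ) (hγ : 0 < γ) (hδ : 0 < δ) (x : ℝ) (hx0 : 0 ≤ x) (hx1 : x < 1)
    (a b X Y : ℕ)
    (hI1 : b ≤ Y) (hI2 : (X : ℤ) + b ≤ a + Y) (hI3 : (b : ℤ) * X ≤ a * Y)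
    (hYX : Y ≤ X)
    (hYX' : (abxyStep γ δ (a, b, X, Y) x).2.2.2 ≤ (abxyStep γ δ (a, b, X, Y) x).2.2.1) :
    (abxyStep γ δ (a, b, X, Y) x).2.1 ≤ (abxyStep γ δ (a, b, X, Y) x).2.2.2 ∧
    ((abxyStep γ δ (a, b, X, Y) x).2.2.1 : ℤ) + (abxyStep γ δ (a, b, X, Y) x).2.1 ≤
      ((abxyStep γ δ (a, b, X, Y) x).1 : ℤ) + (abxyStep γ δ (a, b, X, Y) x).2.2.2 ∧
    ((abxyStep γ δ (a, b, X, Y) x).2.1 : ℤ) * (abxyStep γ δ (a, b, X, Y) x).2.2.1 ≤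
      ((abxyStep γ δ (a, b, X, Y) x).1 : ℤ) * (abxyStep γ δ (a, b, X, Y) x).2.2.2 := by
  simp only [abxyStep] at hYX' ⊢
  split_ifs at hYX' ⊢ with h0 h1 h2 h3 h4
  -- case 1 : frozen
  · exact ⟨hI1, hI2, hI3⟩
  all_goals
    have habp : 0 < a + b := by
      simp only [Nat.max_eq_zero_iff] at h0; push_neg at h0; omega
    have hXYp : 0 < X + Y := by
      simp only [Nat.max_eq_zero_iff] at h0; push_neg at h0; omega
    have habR : (0:ℝ) < (a:ℝ) + b := by exact_mod_cast habp
    have hXYr : (0:ℝ) < (X:ℝ) + Y := by exact_mod_cast hXYp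
    have hlam : (0:ℝ) < γ * ((a : ℝ) + (b : ℝ)) + δ * (a : ℝ) * (b : ℝ) :=
      add_pos_of_pos_of_nonneg (mul_pos hγ habR) (by positivity)
  -- case 2 : decrement (A-1, B-1, X, Y)
  · have habm : 0 < a * b := by
      rcases Nat.eq_zero_or_pos (a * b) with h | h
      · exfalso
        have hz : (a:ℝ) * (b:ℝ) = 0 := by exact_mod_cast congrArg (Nat.cast : ℕ → ℝ) h
        rw [mul_assoc, hz, mul_zero, zero_div] at h1
        linarith
      · exact h
    have ha : 0 < a := Nat.pos_of_ne_zero fun h' => by simp [h'] at habm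
    have hb : 0 < b := Nat.pos_of_ne_zero fun h' => by simp [h'] at habm
    refine ⟨by dsimp only; omega, ?_, ?_⟩
    · dsimp only
      push_cast [ha, hb]
      omega
    · dsimp only
      push_cast [ha, hb]
      have hYXZ : (Y:ℤ) ≤ X := by exact_mod_cast hYX
      nlinarith [hI3, hYXZ]
  -- case 3 : (A+1, B, X+1, Y)
  · refine ⟨hI1, ?_, ?_⟩
    · dsimp only; push_cast; omega
    · dsimp only
      push_cast
      have hI1Z : (b:ℤ) ≤ Y := by exact_mod_cast hI1
      nlinarith [hI3, hI1Z]
  -- case 4 : (A+1, B, X, Y+1)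
  · refine ⟨by dsimp only; omega, ?_, ?_⟩
    · dsimp only; push_cast; omega
    · dsimp only
      push_cast
      have h5 : (0:ℤ) ≤ a := Int.natCast_nonneg a
      have h6 : (0:ℤ) ≤ Y := Int.natCast_nonneg Y
      nlinarith [hI3]
  -- case 5 : (A, B+1, X+1, Y) : impossible
  · exfalso
    have h2' : 1 - γ * (b:ℝ) / (γ * ((a : ℝ) + (b : ℝ)) + δ * (a : ℝ) * (b : ℝ)) ≤ x :=
      not_lt.mp h2
    have key : γ * ((a:ℝ) + b) * Y / ((γ * ((a : ℝ) + (b : ℝ)) + δ * (a : ℝ) * (b : ℝ)) * ((X:ℝ) + Y))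
        < γ * (b:ℝ) / (γ * ((a : ℝ) + (b : ℝ)) + δ * (a : ℝ) * (b : ℝ)) := by
      have e : γ * ((a:ℝ) + b) / (γ * ((a : ℝ) + (b : ℝ)) + δ * (a : ℝ) * (b : ℝ)) * ((Y:ℝ) / ((X:ℝ) + Y))
          = γ * ((a:ℝ) + b) * Y / ((γ * ((a : ℝ) + (b : ℝ)) + δ * (a : ℝ) * (b : ℝ)) * ((X:ℝ) + Y)) := by
        rw [div_mul_div_comm]
      rw [← e]
      linarith
    rw [div_lt_div_iff₀ (by positivity) hlam] at key
    have hI3R : (b:ℝ) * X ≤ (a:ℝ) * Y := by exact_mod_cast hI3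
    nlinarith [mul_nonneg (mul_pos hγ hlam).le (sub_nonneg.mpr hI3R), key]
  -- case 6 : (A, B+1, X, Y+1)
  · have hb : 0 < b := by
      rcases Nat.eq_zero_or_pos b with h' | h'
      · exfalso
        rw [h'] at h2
        push_cast at h2
        rw [mul_zero, zero_div] at h2
        simp at h2
        linarith
      · exact h'
    dsimp only at hYX'
    refine ⟨by dsimp only; omega, ?_, ?_⟩
    · dsimp only; push_cast; omega
    · dsimp only
      push_cast
      have k1 : (0:ℤ) ≤ ((Y:ℤ) - b) * ((X:ℤ) - Y - 1) := mul_nonneg (by omega) (by omega)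
      have k2 : (0:ℤ) ≤ ((a:ℤ) + Y - X - b) * ((Y:ℤ) + 1) := mul_nonneg (by omega) (by omega)
      nlinarith [k1, k2]

/-- If `X 0 = A 0 ≥ B 0 = Y 0` and `X k ≥ Y k` for all `0 ≤ k ≤ K`, then
`X k - Y k ≤ A k - B k` (in `ℤ`) for all `0 ≤ k ≤ K`. -/
theorem ab_yule_coupling (γ δ : ℝ) (hγ : 0 < γ) (hδ : 0 < δ)
    (ξ : ℕ → ℝ) (hξ : ∀ k, 0 ≤ ξ k ∧ ξ k < 1)
    (A B X Y : ℕ → ℕ)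
    (hA : ∀ k, A k = (abxyTraj γ δ ξ (A 0, B 0, X 0, Y 0) k).1)
    (hB : ∀ k, B k = (abxyTraj γ δ ξ (A 0, B 0, X 0, Y 0) k).2.1)
    (hX : ∀ k, X k = (abxyTraj γ δ ξ (A 0, B 0, X 0, Y 0) k).2.2.1)
    (hY : ∀ k, Y k = (abxyTraj γ δ ξ (A 0, B 0, X 0, Y 0) k).2.2.2)
    (hX0 : X 0 = A 0) (hY0 : Y 0 = B 0) (h0 : B 0 ≤ A 0)
    (K : ℕ) (hXY : ∀ k ≤ K, Y k ≤ X k) :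
    ∀ k ≤ K, (X k : ℤ) - (Y k : ℤ) ≤ (A k : ℤ) - (B k : ℤ) := by
  set s := abxyTraj γ δ ξ (A 0, B 0, X 0, Y 0) with hs
  have hsk : ∀ k, s k = (A k, B k, X k, Y k) := by
    intro k
    rw [hA k, hB k, hX k, hY k]
  have hstep : ∀ k, (A (k+1), B (k+1), X (k+1), Y (k+1))
      = abxyStep γ δ (A k, B k, X k, Y k) (ξ (k+1)) := by
    intro k
    rw [← hsk k, ← hsk (k+1), hs]
    rfl
  have main : ∀ k ≤ K, B k ≤ Y k ∧ ((X k : ℤ) + B k ≤ A k + Y k) ∧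
      ((B k : ℤ) * X k ≤ (A k : ℤ) * Y k) := by
    intro k
    induction k with
    | zero =>
      intro _
      refine ⟨by omega, by push_cast; omega, ?_⟩
      rw [hX0, hY0]
      push_cast
      nlinarith []
    | succ k ih =>
      intro hk
      have hk' : k ≤ K := Nat.le_of_succ_le hk
      obtain ⟨i1, i2, i3⟩ := ih hk'
      have hYX'' : Y (k+1) ≤ X (k+1) := hXY (k+1) hk
      have hY' : Y (k+1) = (abxyStep γ δ (A k, B k, X k, Y k) (ξ (k+1))).2.2.2 := by
        rw [← hstep k]
      have hX' : X (k+1) = (abxyStep γ δ (A k, B k, X k, Y k) (ξ (k+1))).2.2.1 := by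
        rw [← hstep k]
      have hA' : A (k+1) = (abxyStep γ δ (A k, B k, X k, Y k) (ξ (k+1))).1 := by
        rw [← hstep k]
      have hB' : B (k+1) = (abxyStep γ δ (A k, B k, X k, Y k) (ξ (k+1))).2.1 := by
        rw [← hstep k]
      have := step_inv γ δ hγ hδ (ξ (k+1)) (hξ (k+1)).1 (hξ (k+1)).2
        (A k) (B k) (X k) (Y k) i1 i2 i3 (hXY k hk')
        (by rw [← hY', ← hX']; exact hYX'')
      rw [← hA', ← hB', ← hX', ← hY'] at this
      exact this
  intro k hk
  have := (main k hk).2.1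
  omega
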